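/- Time to win: if p̄_{nΛμ} > 0 and n > (2 p_Δ / p̄_{nΛμ})² · d_μ, where d_μ = ln(1/w_μ), then p̄_{nΛξ} > 0; that is, once n exceeds this threshold, the universal scheme Λ_ξ has strictly positive expected average profit. -/

import Mathlib

open Finset Filter

/-- A probability distribution on finite binary strings:
nonnegative, `1` on the empty string, and additive under one-symbol extension. -/
def IsDistr (ρ : List Bool → ℝ) : Prop :=
  (∀ x, 0 ≤ ρ x) ∧ ρ [] = 1 ∧
    ∀ x, ρ x = ρ (x ++ [false]) + ρ (x ++ [true])

/-- Conditional probability `ρ(b | x) = ρ(xb)/ρ(x)` (junk `0` when `ρ x = 0`). -/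
noncomputable def condP (ρ : List Bool → ℝ) (x : List Bool) (b : Bool) : ℝ :=
  ρ (x ++ [b]) / ρ x

/-- Instantaneous relative entropy
`h_t(x) = ∑_b μ(b|x) ln (μ(b|x)/ξ(b|x))` (conventions `0·ln 0 = 0` are automatic
since `Real.log 0 = 0` and `r/0 = 0`). -/
noncomputable def instEnt (μ ξ : List Bool → ℝ) (x : List Bool) : ℝ :=
  ∑ b : Bool, condP μ x b * Real.log (condP μ x b / condP ξ x b)

/-- Total relative entropy `H_n = ∑_{t=1}^n ∑_{x_{<t}} μ(x_{<t}) h_t(x_{<t})`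
(histories of length `t-1`, i.e. length `t ∈ {0,…,n-1}`). -/
noncomputable def totalEnt (μ ξ : List Bool → ℝ) (n : ℕ) : ℝ :=
  ∑ t ∈ Finset.range n, ∑ x : Fin t → Bool,
    μ (List.ofFn x) * instEnt μ ξ (List.ofFn x)

/-- `ρ`-expected loss of predicting `y` after history `x`. -/
noncomputable def expLoss (ρ : List Bool → ℝ) (l : Bool → Bool → ℝ)
    (x : List Bool) (y : Bool) : ℝ :=
  ∑ b : Bool, condP ρ x b * l b y

/-- `Y` is a fixed choice of minimizers for the scheme `Λ_ρ`. -/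
def IsPredictor (ρ : List Bool → ℝ) (l : Bool → Bool → ℝ)
    (Y : List Bool → Bool) : Prop :=
  ∀ x y, expLoss ρ l x (Y x) ≤ expLoss ρ l x y

/-- Total `μ`-expected loss `L_{nΛ}` of the scheme with minimizers `Y`. -/
noncomputable def totalLoss (μ : List Bool → ℝ) (l : Bool → Bool → ℝ)
    (Y : List Bool → Bool) (n : ℕ) : ℝ :=
  ∑ t ∈ Finset.range n, ∑ x : Fin t → Bool,
    μ (List.ofFn x) * expLoss μ l (List.ofFn x) (Y (List.ofFn x))

/-- `ρ`-expected profit of action `y` after history `x` (the history also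
encodes the round `t` via its length). -/
noncomputable def expProfit (ρ : List Bool → ℝ) (p : List Bool → Bool → Bool → ℝ)
    (x : List Bool) (y : Bool) : ℝ :=
  ∑ b : Bool, condP ρ x b * p x b y

/-- `Y` is a fixed choice of maximizers of the `ρ`-expected profit (the scheme `Λ_ρ`). -/
def IsGambler (ρ : List Bool → ℝ) (p : List Bool → Bool → Bool → ℝ)
    (Y : List Bool → Bool) : Prop :=
  ∀ x y, expProfit ρ p x y ≤ expProfit ρ p x (Y x)

/-- Total `μ`-expected profit `P_{nΛ}` over the first `n` rounds. -/
noncomputable def totalProfit (μ : List Bool → ℝ) (p : List Bool → Bool → Bool → ℝ)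
    (Y : List Bool → Bool) (n : ℕ) : ℝ :=
  ∑ t ∈ Finset.range n, ∑ x : Fin t → Bool,
    μ (List.ofFn x) * expProfit μ p (List.ofFn x) (Y (List.ofFn x))

/-- Average `μ`-expected profit per round, `p̄_{nΛ} = P_{nΛ}/n`. -/
noncomputable def avgProfit (μ : List Bool → ℝ) (p : List Bool → Bool → Bool → ℝ)
    (Y : List Bool → Bool) (n : ℕ) : ℝ :=
  totalProfit μ p Y n / n

private lemma sum_ofFn_succ (t : ℕ) (g : List Bool → ℝ) :
    ∑ x : Fin (t+1) → Bool, g (List.ofFn x)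
      = ∑ x : Fin t → Bool, ∑ b : Bool, g (List.ofFn x ++ [b]) := by
  rw [show (∑ x : Fin t → Bool, ∑ b : Bool, g (List.ofFn x ++ [b]))
      = ∑ z : (Fin t → Bool) × Bool, g (List.ofFn z.1 ++ [z.2]) from
    (Fintype.sum_prod_type (f := fun z : (Fin t → Bool) × Bool => g (List.ofFn z.1 ++ [z.2]))).symm]
  apply Fintype.sum_equiv ((Equiv.prodComm _ _).trans (Fin.snocEquiv fun _ => Bool)).symm
  intro x
  simp only [Equiv.symm_trans_apply, Fin.snocEquiv, Equiv.coe_fn_symm_mk, Equiv.prodComm_symm,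
    Equiv.prodComm_apply, Prod.swap_prod_mk]
  congr 1
  rw [List.ofFn_succ']
  simp [Fin.init, List.concat_eq_append]
  rfl

private lemma one_sub_inv_le_log {x : ℝ} (hx : 0 < x) : 1 - 1/x ≤ Real.log x := by
  have h := Real.log_le_sub_one_of_pos (x := 1/x) (by positivity)
  rw [Real.log_div one_ne_zero hx.ne', Real.log_one] at h
  linarith

private lemma kl_term_ge {p q : ℝ} (hp : 0 ≤ p) (hq : 0 ≤ q) (h : 0 < p → 0 < q) :
    2*p - 2*Real.sqrt (p*q) ≤ p * Real.log (p/q) := by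
  rcases eq_or_lt_of_le hp with h0 | hp0
  · simp [← h0]
  · have hq0 := h hp0
    have hpq : 0 < p / q := by positivity
    have hlog : Real.log (p/q) = 2 * Real.log (Real.sqrt (p/q)) := by
      rw [Real.log_sqrt hpq.le]; ring
    have hs : 0 < Real.sqrt (p/q) := Real.sqrt_pos.2 hpq
    have h2 : 1 - 1 / Real.sqrt (p/q) ≤ Real.log (Real.sqrt (p/q)) :=
      one_sub_inv_le_log hs
    have hinv : p * (1 / Real.sqrt (p/q)) = Real.sqrt (p*q) := by
      rw [one_div, ← Real.sqrt_inv, ← Real.sqrt_sq hp, ← Real.sqrt_mul (sq_nonneg p)]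
      congr 1
      field_simp
      ring_nf
      rw [Real.sq_sqrt (sq_nonneg p)]
    calc 2*p - 2*Real.sqrt (p*q) = 2 * (p * (1 - 1 / Real.sqrt (p/q))) := by
          rw [mul_sub, hinv]; ring
      _ ≤ 2 * (p * Real.log (Real.sqrt (p/q))) := by
          have := mul_le_mul_of_nonneg_left h2 hp
          linarith
      _ = p * Real.log (p/q) := by rw [hlog]; ring

private lemma sq_diff_le {s u s' u' : ℝ} (hs : 0 ≤ s) (hu : 0 ≤ u) (hs' : 0 ≤ s') (hu' : 0 ≤ u')
    (h1 : s^2 + s'^2 = 1) (h2 : u^2 + u'^2 = 1) :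
    (s^2 - u^2)^2 ≤ (s-u)^2 + (s'-u')^2 := by
  set a := |s - u| with ha
  set b := |s' - u'| with hb
  have hc1 : (a*(s+u) + b*(s'+u'))^2 ≤ (a^2+b^2)*((s+u)^2+(s'+u')^2) := by
    nlinarith [sq_nonneg (a*(s'+u') - b*(s+u))]
  have hB : (s+u)^2+(s'+u')^2 ≤ 4 := by
    nlinarith [sq_nonneg (s-u), sq_nonneg (s'-u')]
  have hac : a*(s+u) = |s^2 - u^2| := by
    rw [ha, ← abs_of_nonneg (by linarith : (0:ℝ) ≤ s+u), ← abs_mul]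
    ring_nf
  have hbd : b*(s'+u') = |s^2 - u^2| := by
    have : s'^2 - u'^2 = -(s^2 - u^2) := by linarith
    rw [hb, ← abs_of_nonneg (by linarith : (0:ℝ) ≤ s'+u'), ← abs_mul]
    rw [show (s'-u')*(s'+u') = s'^2 - u'^2 by ring, this, abs_neg]
  have key : (2*|s^2-u^2|)^2 ≤ (a^2+b^2)*4 := by
    calc (2*|s^2-u^2|)^2 = (a*(s+u) + b*(s'+u'))^2 := by rw [hac, hbd]; ring
      _ ≤ (a^2+b^2)*((s+u)^2+(s'+u')^2) := hc1
      _ ≤ (a^2+b^2)*4 := by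
          have : 0 ≤ a^2+b^2 := by positivity
          nlinarith
  have h4 : (|s^2-u^2|)^2 = (s^2-u^2)^2 := sq_abs _
  have ha2 : a^2 = (s-u)^2 := sq_abs _
  have hb2 : b^2 = (s'-u')^2 := sq_abs _
  nlinarith [key]

private lemma pinsker4 {p0 p1 q0 q1 : ℝ} (hp0 : 0 ≤ p0) (hp1 : 0 ≤ p1) (hq0 : 0 ≤ q0)
    (hq1 : 0 ≤ q1) (hps : p0 + p1 = 1) (hqs : q0 + q1 = 1)
    (h0 : 0 < p0 → 0 < q0) (h1 : 0 < p1 → 0 < q1) :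
    (|p0 - q0| + |p1 - q1|)^2 ≤ 4 * (p0 * Real.log (p0/q0) + p1 * Real.log (p1/q1)) := by
  set s := Real.sqrt p0 with hsdef
  set u := Real.sqrt q0
  set s' := Real.sqrt p1
  set u' := Real.sqrt q1
  have hs2 : s^2 = p0 := Real.sq_sqrt hp0
  have hu2 : u^2 = q0 := Real.sq_sqrt hq0
  have hs'2 : s'^2 = p1 := Real.sq_sqrt hp1
  have hu'2 : u'^2 = q1 := Real.sq_sqrt hq1
  have hKL0 : 2*p0 - 2*Real.sqrt (p0*q0) ≤ p0 * Real.log (p0/q0) := kl_term_ge hp0 hq0 h0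
  have hKL1 : 2*p1 - 2*Real.sqrt (p1*q1) ≤ p1 * Real.log (p1/q1) := kl_term_ge hp1 hq1 h1
  have hsu : Real.sqrt (p0*q0) = s*u := Real.sqrt_mul hp0 _
  have hsu' : Real.sqrt (p1*q1) = s'*u' := Real.sqrt_mul hp1 _
  have hmain : (s^2 - u^2)^2 ≤ (s-u)^2 + (s'-u')^2 :=
    sq_diff_le (Real.sqrt_nonneg _) (Real.sqrt_nonneg _) (Real.sqrt_nonneg _) (Real.sqrt_nonneg _)
      (by rw [hs2, hs'2, hps]) (by rw [hu2, hu'2, hqs])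
  have habs : |p1 - q1| = |p0 - q0| := by
    rw [show p1 - q1 = -(p0 - q0) by linarith, abs_neg]
  have hRHS : (s-u)^2 + (s'-u')^2 = 2 - 2*(s*u) - 2*(s'*u') := by
    have hss := Real.sq_sqrt hp0
    nlinarith [hs2, hu2, hs'2, hu'2]
  rw [habs]
  have hdd : (|p0-q0| + |p0-q0|)^2 = 4*(p0-q0)^2 := by
    rw [show |p0-q0| + |p0-q0| = 2*|p0-q0| by ring]
    rw [mul_pow, sq_abs]; norm_num
  rw [hdd]
  have : (p0 - q0)^2 ≤ 2 - 2*(s*u) - 2*(s'*u') := by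
    rw [← hRHS]
    calc (p0-q0)^2 = (s^2-u^2)^2 := by rw [hs2, hu2]
      _ ≤ _ := hmain
  nlinarith [hKL0, hKL1, hsu, hsu', hps, this]

private lemma sum_distr_eq_one {μ : List Bool → ℝ} (hμ : IsDistr μ) (t : ℕ) :
    ∑ x : Fin t → Bool, μ (List.ofFn x) = 1 := by
  induction t with
  | zero => simp [hμ.2.1]
  | succ t ih =>
    rw [sum_ofFn_succ]
    calc ∑ x : Fin t → Bool, ∑ b : Bool, μ (List.ofFn x ++ [b])
        = ∑ x : Fin t → Bool, μ (List.ofFn x) := by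
          refine Finset.sum_congr rfl fun x _ => ?_
          rw [Fintype.sum_bool]
          linarith [hμ.2.2 (List.ofFn x)]
      _ = 1 := ih

private lemma condP_nonneg {ρ : List Bool → ℝ} (hρ : IsDistr ρ) (x : List Bool) (b : Bool) :
    0 ≤ condP ρ x b := div_nonneg (hρ.1 _) (hρ.1 _)

private lemma condP_sum {ρ : List Bool → ℝ} (hρ : IsDistr ρ) {x : List Bool} (hx : 0 < ρ x) :
    condP ρ x false + condP ρ x true = 1 := by
  unfold condP
  rw [← add_div, ← hρ.2.2, div_self hx.ne']

private lemma ext_zero {μ : List Bool → ℝ} (hμ : IsDistr μ) {x : List Bool} (hx : μ x = 0)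
    (b : Bool) : μ (x ++ [b]) = 0 := by
  have h := hμ.2.2 x
  have h0 := hμ.1 (x ++ [false])
  have h1 := hμ.1 (x ++ [true])
  cases b <;> linarith [hx ▸ h]

private lemma ent_step {μ ξ : List Bool → ℝ} (hμ : IsDistr μ) (hξnn : ∀ z, 0 ≤ ξ z)
    (hdom : ∀ z, 0 < μ z → 0 < ξ z) (x : List Bool) :
    μ x * instEnt μ ξ x
      = (∑ b : Bool, μ (x ++ [b]) * Real.log (μ (x ++ [b]) / ξ (x ++ [b])))
        - μ x * Real.log (μ x / ξ x) := by
  rcases eq_or_lt_of_le (hμ.1 x) with h0 | hx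
  · have hz : ∀ b, μ (x ++ [b]) = 0 := ext_zero hμ h0.symm
    simp [← h0, hz]
  · have hξx : 0 < ξ x := hdom x hx
    have key : ∀ b : Bool, μ x * (condP μ x b * Real.log (condP μ x b / condP ξ x b))
        = μ (x ++ [b]) * Real.log (μ (x ++ [b]) / ξ (x ++ [b]))
          - μ (x ++ [b]) * Real.log (μ x / ξ x) := by
      intro b
      rcases eq_or_lt_of_le (hμ.1 (x ++ [b])) with hb0 | hb
      · simp [condP, ← hb0]
      · have hξb : 0 < ξ (x ++ [b]) := hdom _ hb
        have hμc : condP μ x b = μ (x ++ [b]) / μ x := rfl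
        have hratio : condP μ x b / condP ξ x b
            = (μ (x ++ [b]) / ξ (x ++ [b])) / (μ x / ξ x) := by
          unfold condP
          field_simp
        rw [hratio, Real.log_div (by positivity) (by positivity), hμc]
        field_simp
    unfold instEnt
    rw [Finset.mul_sum]
    rw [Finset.sum_congr rfl fun b _ => key b, Finset.sum_sub_distrib]
    congr 1
    rw [← Finset.sum_mul, Fintype.sum_bool]
    rw [show μ (x ++ [true]) + μ (x ++ [false]) = μ x by rw [hμ.2.2 x]; ring]

private lemma totalEnt_eq {μ ξ : List Bool → ℝ} (hμ : IsDistr μ) (hξnn : ∀ z, 0 ≤ ξ z)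
    (hdom : ∀ z, 0 < μ z → 0 < ξ z) (n : ℕ) :
    totalEnt μ ξ n
      = (∑ x : Fin n → Bool, μ (List.ofFn x) * Real.log (μ (List.ofFn x) / ξ (List.ofFn x)))
        - μ [] * Real.log (μ [] / ξ []) := by
  unfold totalEnt
  set F : ℕ → ℝ := fun t => ∑ x : Fin t → Bool,
      μ (List.ofFn x) * Real.log (μ (List.ofFn x) / ξ (List.ofFn x)) with hF
  have hstep : ∀ t, (∑ x : Fin t → Bool, μ (List.ofFn x) * instEnt μ ξ (List.ofFn x))
      = F (t+1) - F t := by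
    intro t
    rw [hF]
    simp only
    rw [sum_ofFn_succ t (fun z => μ z * Real.log (μ z / ξ z)), ← Finset.sum_sub_distrib]
    exact Finset.sum_congr rfl fun x _ => ent_step hμ hξnn hdom (List.ofFn x)
  rw [Finset.sum_congr rfl fun t _ => hstep t, Finset.sum_range_sub F n]
  congr 1
  rw [hF]
  simp

private lemma profit_diff_le {μ ξ : List Bool → ℝ} (hμ : IsDistr μ) (hξd : IsDistr ξ)
    (hdom : ∀ z, 0 < μ z → 0 < ξ z)
    {p : List Bool → Bool → Bool → ℝ} {pmax pΔ : ℝ}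
    (hp : ∀ x a y, p x a y ∈ Set.Icc (pmax - pΔ) pmax)
    {Yξ : List Bool → Bool} (hYξ : IsGambler ξ p Yξ)
    {x : List Bool} (hx : 0 < μ x) (yμ : Bool) :
    expProfit μ p x yμ - expProfit μ p x (Yξ x)
      ≤ pΔ * ∑ b : Bool, |condP μ x b - condP ξ x b| := by
  have hξx : 0 < ξ x := hdom x hx
  have hμsum := condP_sum hμ hx
  have hξsum := condP_sum hξd hξx
  have hbound : ∀ y, |expProfit μ p x y - expProfit ξ p x y|
      ≤ (pΔ/2) * ∑ b : Bool, |condP μ x b - condP ξ x b| := by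
    intro y
    have heq : expProfit μ p x y - expProfit ξ p x y
        = ∑ b : Bool, (condP μ x b - condP ξ x b) * (p x b y - (pmax - pΔ/2)) := by
      simp only [expProfit, Fintype.sum_bool]
      linear_combination (pmax - pΔ/2) * hμsum - (pmax - pΔ/2) * hξsum
    rw [heq]
    refine (Finset.abs_sum_le_sum_abs _ _).trans ?_
    rw [Finset.mul_sum]
    refine Finset.sum_le_sum fun b _ => ?_
    rw [abs_mul, mul_comm]
    refine mul_le_mul_of_nonneg_right ?_ (abs_nonneg _)
    rw [abs_le]
    obtain ⟨hl, hr⟩ := hp x b y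
    constructor <;> linarith
  have h1 : expProfit ξ p x yμ ≤ expProfit ξ p x (Yξ x) := hYξ x yμ
  have h2 := abs_le.1 (hbound yμ)
  have h3 := abs_le.1 (hbound (Yξ x))
  linarith [h2.1, h2.2, h3.1, h3.2]

/-- Theorem 4(ii), time to win: with profits in
`[p_max − p_Δ, p_max]` and `d_μ = ln (1/w_μ)`, if `p̄_{nΛμ} > 0` and
`n > (2 p_Δ / p̄_{nΛμ})² · d_μ`, then `p̄_{nΛξ} > 0`. -/
theorem time_to_win {ι : Type*} [Countable ι]
    (μs : ι → List Bool → ℝ) (w : ι → ℝ)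
    (hμs : ∀ i, IsDistr (μs i)) (hw : ∀ i, 0 < w i) (hw1 : HasSum w 1)
    (ξ : List Bool → ℝ) (hξ : ∀ x, HasSum (fun i => w i * μs i x) (ξ x))
    (i₀ : ι)
    (p : List Bool → Bool → Bool → ℝ) (pmax pΔ : ℝ) (hpΔ : 0 < pΔ)
    (hp : ∀ x a y, p x a y ∈ Set.Icc (pmax - pΔ) pmax)
    (Yμ Yξ : List Bool → Bool)
    (hYμ : IsGambler (μs i₀) p Yμ) (hYξ : IsGambler ξ p Yξ)
    (n : ℕ)
    (hpos : 0 < avgProfit (μs i₀) p Yμ n)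
    (hn : (2 * pΔ / avgProfit (μs i₀) p Yμ n) ^ 2 * Real.log (1 / w i₀) < n) :
    0 < avgProfit (μs i₀) p Yξ n := by

  classical
  set μ := μs i₀ with hμdef
  have hμ : IsDistr μ := hμs i₀
  -- ξ is a distribution dominating w i₀ • μ
  have hξnn : ∀ z, 0 ≤ ξ z := fun z =>
    hasSum_le (fun i => mul_nonneg (hw i).le ((hμs i).1 z)) hasSum_zero (hξ z)
  have hdomw : ∀ z, w i₀ * μ z ≤ ξ z := fun z =>
    le_hasSum (hξ z) i₀ (fun j _ => mul_nonneg (hw j).le ((hμs j).1 z))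
  have hdom : ∀ z, 0 < μ z → 0 < ξ z := fun z hz =>
    lt_of_lt_of_le (mul_pos (hw i₀) hz) (hdomw z)
  have hξadd : ∀ z, ξ z = ξ (z ++ [false]) + ξ (z ++ [true]) := by
    intro z
    refine (hξ z).unique ?_
    have h1 : HasSum (fun i => w i * μs i (z ++ [false]) + w i * μs i (z ++ [true]))
        (ξ (z ++ [false]) + ξ (z ++ [true])) := (hξ _).add (hξ _)
    convert h1 using 2 with i
    rw [(hμs i).2.2 z]
    ring
  have hξempty : ξ [] = 1 := by
    refine (hξ []).unique ?_
    have : (fun i => w i * μs i []) = w := funext fun i => by rw [(hμs i).2.1, mul_one]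
    rw [this]
    exact hw1
  have hξd : IsDistr ξ := ⟨hξnn, hξempty, hξadd⟩
  -- n > 0
  have hn0 : 0 < n := by
    rcases Nat.eq_zero_or_pos n with h | h
    · rw [h] at hpos; simp [avgProfit] at hpos
    · exact h
  have hnR : 0 < (n : ℝ) := by exact_mod_cast hn0
  set pb := avgProfit μ p Yμ n with hpb
  have hPμ : totalProfit μ p Yμ n = n * pb := by
    rw [hpb]
    unfold avgProfit
    field_simp
  set d := Real.log (1 / w i₀) with hd
  have hwle : w i₀ ≤ 1 := le_hasSum hw1 i₀ (fun j _ => (hw j).le)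
  have hd0 : 0 ≤ d := Real.log_nonneg (by rw [le_div_iff₀ (hw i₀)]; linarith)
  -- entropy bound
  have hH : totalEnt μ ξ n ≤ d := by
    rw [totalEnt_eq hμ hξnn hdom, hμ.2.1, hξempty]
    norm_num
    calc ∑ x : Fin n → Bool, μ (List.ofFn x) * Real.log (μ (List.ofFn x) / ξ (List.ofFn x))
        ≤ ∑ x : Fin n → Bool, μ (List.ofFn x) * d := by
          refine Finset.sum_le_sum fun x _ => ?_
          set z := List.ofFn x
          rcases eq_or_lt_of_le (hμ.1 z) with h0 | hz
          · rw [← h0]; simp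
          · refine mul_le_mul_of_nonneg_left ?_ (hμ.1 z)
            have hξz := hdom z hz
            rw [hd]
            refine Real.log_le_log (by positivity) ?_
            rw [div_le_div_iff₀ hξz (hw i₀)]
            linarith [hdomw z]
      _ = d := by rw [← Finset.sum_mul, sum_distr_eq_one hμ, one_mul]
  -- total variation quantity
  set A : List Bool → ℝ := fun z => ∑ b : Bool, |condP μ z b - condP ξ z b| with hA
  have hAnn : ∀ z, 0 ≤ A z := fun z => Finset.sum_nonneg fun b _ => abs_nonneg _
  set S := ∑ t ∈ Finset.range n, ∑ x : Fin t → Bool, μ (List.ofFn x) * A (List.ofFn x) with hS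
  have hSnn : 0 ≤ S :=
    Finset.sum_nonneg fun t _ => Finset.sum_nonneg fun x _ => mul_nonneg (hμ.1 _) (hAnn _)
  -- step 1: profit difference bounded by pΔ * S
  have hstep1 : totalProfit μ p Yμ n - totalProfit μ p Yξ n ≤ pΔ * S := by
    unfold totalProfit
    rw [hS, Finset.mul_sum, ← Finset.sum_sub_distrib]
    refine Finset.sum_le_sum fun t _ => ?_
    rw [Finset.mul_sum, ← Finset.sum_sub_distrib]
    refine Finset.sum_le_sum fun x _ => ?_
    set z := List.ofFn x
    rcases eq_or_lt_of_le (hμ.1 z) with h0 | hz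
    · rw [← h0]; simp
    · rw [← mul_sub, show pΔ * (μ z * A z) = μ z * (pΔ * A z) by ring]
      exact mul_le_mul_of_nonneg_left (profit_diff_le hμ hξd hdom hp hYξ hz (Yμ z)) (hμ.1 z)
  -- step 2: Cauchy-Schwarz + Pinsker
  have hg : ∀ z : List Bool, μ z * A z ^ 2 ≤ 4 * (μ z * instEnt μ ξ z) := by
    intro z
    rcases eq_or_lt_of_le (hμ.1 z) with h0 | hz
    · rw [← h0]; ring_nf; simp
    · rw [show 4 * (μ z * instEnt μ ξ z) = μ z * (4 * instEnt μ ξ z) by ring]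
      refine mul_le_mul_of_nonneg_left ?_ (hμ.1 z)
      have hξz := hdom z hz
      have hpink := pinsker4 (condP_nonneg hμ z false) (condP_nonneg hμ z true)
        (condP_nonneg hξd z false) (condP_nonneg hξd z true)
        (condP_sum hμ hz) (condP_sum hξd hξz)
        (fun hc => by
          have hb : 0 < μ (z ++ [false]) := by
            by_contra hcon
            push_neg at hcon
            have : μ (z ++ [false]) = 0 := le_antisymm hcon (hμ.1 _)
            rw [condP, this, zero_div] at hc
            exact lt_irrefl 0 hc
          exact div_pos (hdom _ hb) hξz)
        (fun hc => by
          have hb : 0 < μ (z ++ [true]) := by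
            by_contra hcon
            push_neg at hcon
            have : μ (z ++ [true]) = 0 := le_antisymm hcon (hμ.1 _)
            rw [condP, this, zero_div] at hc
            exact lt_irrefl 0 hc
          exact div_pos (hdom _ hb) hξz)
      rw [hA]
      simp only
      rw [Fintype.sum_bool]
      unfold instEnt
      rw [Fintype.sum_bool]
      calc (|condP μ z true - condP ξ z true| + |condP μ z false - condP ξ z false|) ^ 2
          = (|condP μ z false - condP ξ z false| + |condP μ z true - condP ξ z true|) ^ 2 := by
            ring
        _ ≤ 4 * (condP μ z false * Real.log (condP μ z false / condP ξ z false)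
              + condP μ z true * Real.log (condP μ z true / condP ξ z true)) := hpink
        _ = 4 * (condP μ z true * Real.log (condP μ z true / condP ξ z true)
              + condP μ z false * Real.log (condP μ z false / condP ξ z false)) := by ring
  have hstep2 : S ^ 2 ≤ (n : ℝ) * (4 * d) := by
    set I := (Finset.range n).sigma (fun t => (Finset.univ : Finset (Fin t → Bool))) with hI
    have hCS := Finset.sum_sq_le_sum_mul_sum_of_sq_eq_mul I
      (r := fun z : Σ t : ℕ, Fin t → Bool => μ (List.ofFn z.2) * A (List.ofFn z.2))
      (f := fun z : Σ t : ℕ, Fin t → Bool => μ (List.ofFn z.2))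
      (g := fun z : Σ t : ℕ, Fin t → Bool => μ (List.ofFn z.2) * A (List.ofFn z.2) ^ 2)
      (fun z _ => hμ.1 _) (fun z _ => mul_nonneg (hμ.1 _) (sq_nonneg _)) (fun z _ => by ring)
    rw [hI, Finset.sum_sigma, Finset.sum_sigma, Finset.sum_sigma] at hCS
    have hf : ∑ t ∈ Finset.range n, ∑ x : Fin t → Bool, μ (List.ofFn x) = (n : ℝ) := by
      rw [Finset.sum_congr rfl fun t _ => sum_distr_eq_one hμ t]
      simp
    have hgsum : (∑ t ∈ Finset.range n, ∑ x : Fin t → Bool,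
        μ (List.ofFn x) * A (List.ofFn x) ^ 2) ≤ 4 * d := by
      calc (∑ t ∈ Finset.range n, ∑ x : Fin t → Bool, μ (List.ofFn x) * A (List.ofFn x) ^ 2)
          ≤ ∑ t ∈ Finset.range n, ∑ x : Fin t → Bool,
              4 * (μ (List.ofFn x) * instEnt μ ξ (List.ofFn x)) :=
            Finset.sum_le_sum fun t _ => Finset.sum_le_sum fun x _ => hg _
        _ = 4 * totalEnt μ ξ n := by
            unfold totalEnt
            rw [Finset.mul_sum]
            exact Finset.sum_congr rfl fun t _ => by rw [Finset.mul_sum]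
        _ ≤ 4 * d := by linarith
    calc S ^ 2 ≤ (∑ t ∈ Finset.range n, ∑ x : Fin t → Bool, μ (List.ofFn x))
          * ∑ t ∈ Finset.range n, ∑ x : Fin t → Bool, μ (List.ofFn x) * A (List.ofFn x) ^ 2 := by
          rw [hS]; exact hCS
      _ ≤ (n : ℝ) * (4 * d) := by
          rw [hf]
          exact mul_le_mul_of_nonneg_left hgsum hnR.le
  -- conclude
  have hSle : S ≤ 2 * Real.sqrt ((n : ℝ) * d) := by
    have h1 : S = Real.sqrt (S ^ 2) := (Real.sqrt_sq hSnn).symm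
    rw [h1]
    calc Real.sqrt (S ^ 2) ≤ Real.sqrt ((n : ℝ) * (4 * d)) := Real.sqrt_le_sqrt hstep2
      _ = 2 * Real.sqrt ((n : ℝ) * d) := by
          rw [show (n : ℝ) * (4 * d) = 2 ^ 2 * ((n : ℝ) * d) by ring,
            Real.sqrt_mul (by positivity), Real.sqrt_sq (by norm_num)]
  have hlt : 2 * pΔ * Real.sqrt ((n : ℝ) * d) < (n : ℝ) * pb := by
    have hnd0 : 0 ≤ (n : ℝ) * d := by positivity
    have hsq : (2 * pΔ * Real.sqrt ((n : ℝ) * d)) ^ 2 = 4 * pΔ ^ 2 * ((n : ℝ) * d) := by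
      rw [mul_pow, mul_pow, Real.sq_sqrt hnd0]
      ring
    have hkey : 4 * pΔ ^ 2 * d < (n : ℝ) * pb ^ 2 := by
      have hpb2 : 0 < pb ^ 2 := by positivity
      have h' : (2 * pΔ / pb) ^ 2 * d < (n : ℝ) := hn
      rw [div_pow, div_mul_eq_mul_div, div_lt_iff₀ hpb2] at h'
      nlinarith
    have hsqlt : (2 * pΔ * Real.sqrt ((n : ℝ) * d)) ^ 2 < ((n : ℝ) * pb) ^ 2 := by
      rw [hsq]
      nlinarith
    exact lt_of_pow_lt_pow_left₀ 2 (by positivity) hsqlt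
  have hPξ : 0 < totalProfit μ p Yξ n := by
    have : totalProfit μ p Yξ n ≥ totalProfit μ p Yμ n - pΔ * S := by linarith
    have hps : pΔ * S ≤ pΔ * (2 * Real.sqrt ((n : ℝ) * d)) :=
      mul_le_mul_of_nonneg_left hSle hpΔ.le
    rw [hPμ] at this
    nlinarith
  unfold avgProfit
  exact div_pos hPξ hnR
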